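/- Define g : [0, π) → ℝ by g(z) = arccos( ((π − z) cos z + sin z)/π ). Then g is strictly monotonically increasing on [0, π); equivalently, the function z ↦ ((π − z) cos z + sin z)/π is strictly monotonically decreasing on [0, π), with values in (−1, 1]. -/

import Mathlib

/-- The layer-to-layer embedding-angle map of an infinitely wide ReLU network:
`g z = arccos(((π − z) cos z + sin z)/π)`. -/
noncomputable def g (z : ℝ) : ℝ :=
  Real.arccos (((Real.pi - z) * Real.cos z + Real.sin z) / Real.pi)

/-- The auxiliary function `g̃ z = ((π − z) cos z + sin z)/π`, so that `g = arccos ∘ g̃`. -/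
noncomputable def gAux (z : ℝ) : ℝ :=
  ((Real.pi - z) * Real.cos z + Real.sin z) / Real.pi

lemma gAux_hasDerivAt (z : ℝ) :
    HasDerivAt gAux (-((Real.pi - z) * Real.sin z) / Real.pi) z := by
  have h : HasDerivAt (fun z => (Real.pi - z) * Real.cos z + Real.sin z)
      (((0 - 1) * Real.cos z + (Real.pi - z) * (-Real.sin z)) + Real.cos z) z := by
    exact (((hasDerivAt_const z Real.pi).sub (hasDerivAt_id z)).mul (Real.hasDerivAt_cos z)).add
      (Real.hasDerivAt_sin z)
  have : HasDerivAt gAux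
      (((0 - 1) * Real.cos z + (Real.pi - z) * (-Real.sin z) + Real.cos z) / Real.pi) z :=
    h.div_const Real.pi
  convert this using 1
  ring

lemma gAux_strictAntiOn : StrictAntiOn gAux (Set.Ico 0 Real.pi) := by
  have hconv : Convex ℝ (Set.Ico (0:ℝ) Real.pi) := convex_Ico _ _
  apply StrictAntiOn.mono (s := Set.Icc 0 Real.pi) ?_ Set.Ico_subset_Icc_self
  apply strictAntiOn_of_deriv_neg (convex_Icc _ _)
  · exact (continuous_const.sub continuous_id).mul Real.continuous_cos
      |>.add Real.continuous_sin |>.div_const _ |>.continuousOn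
  · intro x hx
    rw [interior_Icc] at hx
    rw [(gAux_hasDerivAt x).deriv]
    have h1 : 0 < Real.pi - x := by linarith [hx.2]
    have h2 : 0 < Real.sin x := Real.sin_pos_of_pos_of_lt_pi hx.1 hx.2
    have := mul_pos h1 h2
    have hπ := Real.pi_pos
    exact div_neg_of_neg_of_pos (by linarith) hπ

lemma gAux_mem (z : ℝ) (hz : z ∈ Set.Ico (0:ℝ) Real.pi) : gAux z ∈ Set.Ioc (-1:ℝ) 1 := by
  have hπ := Real.pi_pos
  have h0 : gAux 0 = 1 := by simp [gAux, div_self hπ.ne']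
  constructor
  · rw [gAux, lt_div_iff₀ hπ, neg_one_mul]
    have hcos : -1 ≤ Real.cos z := Real.neg_one_le_cos z
    have hsin : 0 ≤ Real.sin z := Real.sin_nonneg_of_nonneg_of_le_pi hz.1 hz.2.le
    rcases eq_or_lt_of_le hz.1 with h | h
    · subst h; simp; linarith
    · have h1 : 0 < Real.pi - z := by linarith [hz.2]
      have : -(Real.pi - z) ≤ (Real.pi - z) * Real.cos z := by nlinarith
      linarith
  · rcases eq_or_lt_of_le hz.1 with h | h
    · subst h; simp [h0]
    · calc gAux z ≤ gAux 0 := le_of_lt (gAux_strictAntiOn (by simp [hπ]) hz h)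
        _ = 1 := h0
    
/-- Part 1 of Proposition A.1 of the paper.
`g` is strictly monotonically increasing on `[0, π)`; equivalently, the function
`z ↦ ((π − z) cos z + sin z)/π` is strictly monotonically decreasing on `[0, π)`,
with values in `(−1, 1]`. -/
theorem g_strictMonoOn :
    StrictMonoOn g (Set.Ico 0 Real.pi) ∧
    StrictAntiOn gAux (Set.Ico 0 Real.pi) ∧
    ∀ z ∈ Set.Ico (0 : ℝ) Real.pi, gAux z ∈ Set.Ioc (-1 : ℝ) 1 := by
  refine ⟨?_, gAux_strictAntiOn, gAux_mem⟩
  intro x hx y hy hxy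
  have hgx := gAux_mem x hx
  have hgy := gAux_mem y hy
  have hlt : gAux y < gAux x := gAux_strictAntiOn hx hy hxy
  have : Real.arccos (gAux x) < Real.arccos (gAux y) :=
    Real.strictAntiOn_arccos ⟨hgy.1.le, hgy.2⟩ ⟨hgx.1.le, hgx.2⟩ hlt
  simpa [g, gAux] using this
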